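/- arXiv:2008.03762 — 2 statements merged into one kernel-verified Lean document; each statement's English description precedes it below -/
import Mathlib

section
/- Consider a single-server discrete-time queue $q(k+1) = \max\{0, q(k) + a(k) - s(k)\}$ where $\{(a(k), s(k))\}$ are i.i.d. pairs with $a(k), s(k) \in [0, A]$ almost surely, $\mathbb{E}[a(k)] = \lambda - \epsilon$, $\mathbb{E}[s(k)] = \lambda + \epsilon$ for some $\lambda > 0$, $0 < \epsilon < \lambda$, and $\mathrm{Cov}(a(k), s(k)) = 0$. Suppose the chain has a stationary distribution $\bar q$ with finite second moment. Writing $u(k) = s(k) - \min\{q(k) + a(k), s(k)\}$ for the unused service, the stationary mean satisfies $\mathbb{E}[\bar q] = \frac{\mathrm{Var}(a) + \mathrm{Var}(s) + 4\epsilon^2 - \mathbb{E}[\bar u^2]}{4\epsilon}$, where $\mathbb{E}[\bar u] = 2\epsilon$ and $\mathbb{E}[\bar u^2] \le 2A\epsilon$. In particular, if $\epsilon \le \frac{\mathrm{Var}(a)+\mathrm{Var}(s)}{4A}$ then $\mathbb{E}[\bar q] \ge \frac{\mathrm{Var}(a)+\mathrm{Var}(s)}{8\epsilon}$. -/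
open MeasureTheory ProbabilityTheory

lemma max_sq_eq (x : ℝ) : (max 0 x) ^ 2 = x ^ 2 - (max 0 (-x)) ^ 2 := by
  rcases le_total 0 x with h | h
  · rw [max_eq_right h, max_eq_left (by linarith)]; ring
  · rw [max_eq_left h, max_eq_right (by linarith)]; ring

lemma max_eq_add (x : ℝ) : (max 0 x) = x + max 0 (-x) := by
  rcases le_total 0 x with h | h
  · rw [max_eq_right h, max_eq_left (by linarith)]; ring
  · rw [max_eq_left h, max_eq_right (by linarith)]; ring

lemma integrable_of_bdd {Ω : Type*} [MeasurableSpace Ω] {μ : Measure Ω}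
    [IsProbabilityMeasure μ] {f : Ω → ℝ} (hf : Measurable f) {C : ℝ}
    (h : ∀ᵐ ω ∂μ, ‖f ω‖ ≤ C) : Integrable f μ :=
  (memLp_top_of_bound hf.aestronglyMeasurable C h).integrable le_top

/-- Kingman-type heavy-traffic bound for a discrete-time G/G/1 queue in
stationarity: setting the stationary drifts of `q` and `q²` to zero identifies
the stationary mean queue length, which is at least `(Var a + Var s)/(8ε)`
when `ε` is small. -/
theorem gg1_stationary_mean
    {Ω : Type*} [MeasurableSpace Ω] (μ : Measure Ω) [IsProbabilityMeasure μ]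
    (a s q : Ω → ℝ) (A lam ε : ℝ)
    (ha_meas : Measurable a) (hs_meas : Measurable s) (hq_meas : Measurable q)
    (hA : 0 < A) (hlam : 0 < lam) (hε : 0 < ε) (hεlam : ε < lam)
    (ha_bdd : ∀ᵐ ω ∂μ, 0 ≤ a ω ∧ a ω ≤ A)
    (hs_bdd : ∀ᵐ ω ∂μ, 0 ≤ s ω ∧ s ω ≤ A)
    (hq_nonneg : ∀ᵐ ω ∂μ, 0 ≤ q ω)
    (ha_mean : ∫ ω, a ω ∂μ = lam - ε)
    (hs_mean : ∫ ω, s ω ∂μ = lam + ε)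
    (hcov : ∫ ω, a ω * s ω ∂μ = (lam - ε) * (lam + ε))
    (hindep : IndepFun q (fun ω => (a ω, s ω)) μ)
    (hstat : Measure.map (fun ω => max 0 (q ω + a ω - s ω)) μ = Measure.map q μ)
    (hq2 : Integrable (fun ω => (q ω) ^ 2) μ)
    (u : Ω → ℝ)
    (hu : ∀ ω, u ω = s ω - min (q ω + a ω) (s ω)) :
    (∫ ω, u ω ∂μ = 2 * ε) ∧
    (∫ ω, (u ω) ^ 2 ∂μ ≤ 2 * A * ε) ∧
    (∫ ω, q ω ∂μ =
      ((∫ ω, (a ω) ^ 2 ∂μ - (lam - ε) ^ 2) + (∫ ω, (s ω) ^ 2 ∂μ - (lam + ε) ^ 2)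
        + 4 * ε ^ 2 - ∫ ω, (u ω) ^ 2 ∂μ) / (4 * ε)) ∧
    (ε ≤ ((∫ ω, (a ω) ^ 2 ∂μ - (lam - ε) ^ 2)
            + (∫ ω, (s ω) ^ 2 ∂μ - (lam + ε) ^ 2)) / (4 * A) →
      ((∫ ω, (a ω) ^ 2 ∂μ - (lam - ε) ^ 2)
          + (∫ ω, (s ω) ^ 2 ∂μ - (lam + ε) ^ 2)) / (8 * ε) ≤ ∫ ω, q ω ∂μ) := by
  -- u as a max
  have hu' : ∀ ω, u ω = max 0 (-(q ω + a ω - s ω)) := by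
    intro ω
    rw [hu ω]
    rcases le_total (q ω + a ω) (s ω) with h | h
    · rw [min_eq_left h, max_eq_right (by linarith)]; ring
    · rw [min_eq_right h, max_eq_left (by linarith)]; ring
  have hu_meas : Measurable u := by
    have : u = fun ω => max 0 (-(q ω + a ω - s ω)) := funext hu'
    rw [this]
    exact measurable_const.max ((hq_meas.add ha_meas).sub hs_meas).neg
  -- basic integrability
  have int_a : Integrable a μ := integrable_of_bdd ha_meas
    (by filter_upwards [ha_bdd] with ω h; rw [Real.norm_eq_abs, abs_of_nonneg h.1]; exact h.2)
  have int_s : Integrable s μ := integrable_of_bdd hs_meas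
    (by filter_upwards [hs_bdd] with ω h; rw [Real.norm_eq_abs, abs_of_nonneg h.1]; exact h.2)
  have int_q : Integrable q μ := by
    refine Integrable.mono' ((integrable_const 1).add hq2) hq_meas.aestronglyMeasurable
      (ae_of_all _ fun ω => ?_)
    simp only [Pi.add_apply, Pi.one_apply]
    rw [Real.norm_eq_abs]
    nlinarith [sq_nonneg (|q ω| - 1), abs_nonneg (q ω), sq_abs (q ω)]
  have hu_bdd : ∀ᵐ ω ∂μ, 0 ≤ u ω ∧ u ω ≤ A := by
    filter_upwards [ha_bdd, hs_bdd, hq_nonneg] with ω ha hs hq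
    rw [hu' ω]
    constructor
    · exact le_max_left _ _
    · rcases le_total 0 (-(q ω + a ω - s ω)) with h | h
      · rw [max_eq_right h]; linarith [hs.2, ha.1]
      · rw [max_eq_left h]; linarith
  have int_u : Integrable u μ := integrable_of_bdd hu_meas
    (by filter_upwards [hu_bdd] with ω h; rw [Real.norm_eq_abs, abs_of_nonneg h.1]; exact h.2)
  have int_u2 : Integrable (fun ω => (u ω) ^ 2) μ := integrable_of_bdd (hu_meas.pow_const 2)
    (C := A ^ 2) (by
      filter_upwards [hu_bdd] with ω h
      rw [Real.norm_eq_abs, abs_of_nonneg (sq_nonneg _)]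
      exact pow_le_pow_left₀ h.1 h.2 2)
  have int_a2 : Integrable (fun ω => (a ω) ^ 2) μ := integrable_of_bdd (ha_meas.pow_const 2)
    (C := A ^ 2) (by
      filter_upwards [ha_bdd] with ω h
      rw [Real.norm_eq_abs, abs_of_nonneg (sq_nonneg _)]
      exact pow_le_pow_left₀ h.1 h.2 2)
  have int_s2 : Integrable (fun ω => (s ω) ^ 2) μ := integrable_of_bdd (hs_meas.pow_const 2)
    (C := A ^ 2) (by
      filter_upwards [hs_bdd] with ω h
      rw [Real.norm_eq_abs, abs_of_nonneg (sq_nonneg _)]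
      exact pow_le_pow_left₀ h.1 h.2 2)
  have int_as : Integrable (fun ω => a ω * s ω) μ :=
    int_s.bdd_mul ha_meas.aestronglyMeasurable
      (by filter_upwards [ha_bdd] with ω h; rw [Real.norm_eq_abs, abs_of_nonneg h.1]; exact h.2)
  have int_qa : Integrable (fun ω => q ω * a ω) μ := by
    have h1 : Integrable (fun ω => a ω * q ω) μ :=
      int_q.bdd_mul ha_meas.aestronglyMeasurable
        (by filter_upwards [ha_bdd] with ω h; rw [Real.norm_eq_abs, abs_of_nonneg h.1]; exact h.2)
    exact h1.congr (ae_of_all _ fun ω => mul_comm _ _)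
  have int_qs : Integrable (fun ω => q ω * s ω) μ := by
    have h1 : Integrable (fun ω => s ω * q ω) μ :=
      int_q.bdd_mul hs_meas.aestronglyMeasurable
        (by filter_upwards [hs_bdd] with ω h; rw [Real.norm_eq_abs, abs_of_nonneg h.1]; exact h.2)
    exact h1.congr (ae_of_all _ fun ω => mul_comm _ _)
  -- independence consequences
  have hqa : IndepFun q a μ := hindep.comp measurable_id measurable_fst
  have hqs : IndepFun q s μ :=
    hindep.comp measurable_id measurable_snd
  have hEqa : ∫ ω, q ω * a ω ∂μ = (∫ ω, q ω ∂μ) * (lam - ε) := by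
    have h := hqa.integral_mul_eq_mul_integral int_q.aestronglyMeasurable int_a.aestronglyMeasurable
    simpa [Pi.mul_apply, ha_mean] using h
  have hEqs : ∫ ω, q ω * s ω ∂μ = (∫ ω, q ω ∂μ) * (lam + ε) := by
    have h := hqs.integral_mul_eq_mul_integral int_q.aestronglyMeasurable int_s.aestronglyMeasurable
    simpa [Pi.mul_apply, hs_mean] using h
  -- the mapped random variable
  set Q' : Ω → ℝ := fun ω => max 0 (q ω + a ω - s ω) with hQ'
  have hQ'_meas : Measurable Q' :=
    measurable_const.max ((hq_meas.add ha_meas).sub hs_meas)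
  -- pointwise identities
  have hQ'_eq : ∀ ω, Q' ω = (q ω + a ω - s ω) + u ω := by
    intro ω; rw [hu' ω]; exact max_eq_add _
  have hQ'_sq : ∀ ω, Q' ω ^ 2 = (q ω + a ω - s ω) ^ 2 - u ω ^ 2 := by
    intro ω; rw [hu' ω]; exact max_sq_eq _
  -- transfer of integrals by stationarity
  have hmean_eq : ∫ ω, Q' ω ∂μ = ∫ ω, q ω ∂μ := by
    have h1 : ∫ ω, Q' ω ∂μ = ∫ x, x ∂(Measure.map Q' μ) :=
      (integral_map hQ'_meas.aemeasurable aestronglyMeasurable_id).symm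
    have h2 : ∫ ω, q ω ∂μ = ∫ x, x ∂(Measure.map q μ) :=
      (integral_map hq_meas.aemeasurable aestronglyMeasurable_id).symm
    rw [h1, h2, hstat]
  have hsq_eq : ∫ ω, Q' ω ^ 2 ∂μ = ∫ ω, q ω ^ 2 ∂μ := by
    have hmeas2 : StronglyMeasurable fun x : ℝ => x ^ 2 :=
      (measurable_id.pow_const 2).stronglyMeasurable
    have h1 : ∫ ω, Q' ω ^ 2 ∂μ = ∫ x, x ^ 2 ∂(Measure.map Q' μ) :=
      (integral_map hQ'_meas.aemeasurable hmeas2.aestronglyMeasurable).symm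
    have h2 : ∫ ω, q ω ^ 2 ∂μ = ∫ x, x ^ 2 ∂(Measure.map q μ) :=
      (integral_map hq_meas.aemeasurable hmeas2.aestronglyMeasurable).symm
    rw [h1, h2, hstat]
  -- integrability of combinations
  have int_qpa : Integrable (fun ω => q ω + a ω) μ := int_q.add int_a
  have int_qas : Integrable (fun ω => q ω + a ω - s ω) μ := int_qpa.sub int_s
  -- first moment identity gives E u = 2ε
  have hEu : ∫ ω, u ω ∂μ = 2 * ε := by
    have hrw : ∫ ω, Q' ω ∂μ = ∫ ω, ((q ω + a ω - s ω) + u ω) ∂μ :=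
      integral_congr_ae (ae_of_all _ hQ'_eq)
    have e1 : ∫ ω, ((q ω + a ω - s ω) + u ω) ∂μ
        = (∫ ω, (q ω + a ω - s ω) ∂μ) + ∫ ω, u ω ∂μ := integral_add int_qas int_u
    have e2 : ∫ ω, (q ω + a ω - s ω) ∂μ
        = (∫ ω, (q ω + a ω) ∂μ) - ∫ ω, s ω ∂μ := integral_sub int_qpa int_s
    have e3 : ∫ ω, (q ω + a ω) ∂μ = (∫ ω, q ω ∂μ) + ∫ ω, a ω ∂μ :=
      integral_add int_q int_a
    rw [hrw, e1, e2, e3, ha_mean, hs_mean] at hmean_eq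
    linarith
  -- second moment bound
  have hEu2 : ∫ ω, (u ω) ^ 2 ∂μ ≤ 2 * A * ε := by
    have hb : ∫ ω, (u ω) ^ 2 ∂μ ≤ ∫ ω, A * u ω ∂μ := by
      refine integral_mono_ae int_u2 (int_u.const_mul A) ?_
      filter_upwards [hu_bdd] with ω h
      nlinarith [h.1, h.2]
    rw [integral_const_mul, hEu] at hb
    linarith
  -- second moment identity
  have hkey : ∫ ω, q ω ∂μ =
      ((∫ ω, (a ω) ^ 2 ∂μ - (lam - ε) ^ 2) + (∫ ω, (s ω) ^ 2 ∂μ - (lam + ε) ^ 2)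
        + 4 * ε ^ 2 - ∫ ω, (u ω) ^ 2 ∂μ) / (4 * ε) := by
    have hrw : ∫ ω, Q' ω ^ 2 ∂μ =
        ∫ ω, ((q ω ^ 2 + a ω ^ 2 + s ω ^ 2 + 2 * (q ω * a ω) + (-2) * (q ω * s ω)
          + (-2) * (a ω * s ω)) - u ω ^ 2) ∂μ := by
      refine integral_congr_ae (ae_of_all _ fun ω => ?_)
      simp only [hQ'_sq]; ring
    have i1 : Integrable (fun ω => q ω ^ 2 + a ω ^ 2) μ := hq2.add int_a2
    have i2 : Integrable (fun ω => q ω ^ 2 + a ω ^ 2 + s ω ^ 2) μ := i1.add int_s2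
    have i3 : Integrable (fun ω => 2 * (q ω * a ω)) μ := int_qa.const_mul 2
    have i4 : Integrable (fun ω => q ω ^ 2 + a ω ^ 2 + s ω ^ 2 + 2 * (q ω * a ω)) μ :=
      i2.add i3
    have i5 : Integrable (fun ω => (-2) * (q ω * s ω)) μ := int_qs.const_mul (-2)
    have i6 : Integrable (fun ω => q ω ^ 2 + a ω ^ 2 + s ω ^ 2 + 2 * (q ω * a ω)
        + (-2) * (q ω * s ω)) μ := i4.add i5
    have i7 : Integrable (fun ω => (-2) * (a ω * s ω)) μ := int_as.const_mul (-2)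
    have i8 : Integrable (fun ω => q ω ^ 2 + a ω ^ 2 + s ω ^ 2 + 2 * (q ω * a ω)
        + (-2) * (q ω * s ω) + (-2) * (a ω * s ω)) μ := i6.add i7
    have e0 : ∫ ω, ((q ω ^ 2 + a ω ^ 2 + s ω ^ 2 + 2 * (q ω * a ω) + (-2) * (q ω * s ω)
          + (-2) * (a ω * s ω)) - u ω ^ 2) ∂μ
        = (∫ ω, (q ω ^ 2 + a ω ^ 2 + s ω ^ 2 + 2 * (q ω * a ω) + (-2) * (q ω * s ω)
          + (-2) * (a ω * s ω)) ∂μ) - ∫ ω, u ω ^ 2 ∂μ := integral_sub i8 int_u2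
    have e1 : ∫ ω, (q ω ^ 2 + a ω ^ 2 + s ω ^ 2 + 2 * (q ω * a ω) + (-2) * (q ω * s ω)
          + (-2) * (a ω * s ω)) ∂μ
        = (∫ ω, (q ω ^ 2 + a ω ^ 2 + s ω ^ 2 + 2 * (q ω * a ω) + (-2) * (q ω * s ω)) ∂μ)
          + ∫ ω, (-2) * (a ω * s ω) ∂μ := integral_add i6 i7
    have e2 : ∫ ω, (q ω ^ 2 + a ω ^ 2 + s ω ^ 2 + 2 * (q ω * a ω) + (-2) * (q ω * s ω)) ∂μ
        = (∫ ω, (q ω ^ 2 + a ω ^ 2 + s ω ^ 2 + 2 * (q ω * a ω)) ∂μ)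
          + ∫ ω, (-2) * (q ω * s ω) ∂μ := integral_add i4 i5
    have e3 : ∫ ω, (q ω ^ 2 + a ω ^ 2 + s ω ^ 2 + 2 * (q ω * a ω)) ∂μ
        = (∫ ω, (q ω ^ 2 + a ω ^ 2 + s ω ^ 2) ∂μ) + ∫ ω, 2 * (q ω * a ω) ∂μ :=
      integral_add i2 i3
    have e4 : ∫ ω, (q ω ^ 2 + a ω ^ 2 + s ω ^ 2) ∂μ
        = (∫ ω, (q ω ^ 2 + a ω ^ 2) ∂μ) + ∫ ω, s ω ^ 2 ∂μ := integral_add i1 int_s2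
    have e5 : ∫ ω, (q ω ^ 2 + a ω ^ 2) ∂μ
        = (∫ ω, q ω ^ 2 ∂μ) + ∫ ω, a ω ^ 2 ∂μ := integral_add hq2 int_a2
    have e6 : ∫ ω, 2 * (q ω * a ω) ∂μ = 2 * ∫ ω, q ω * a ω ∂μ := integral_const_mul 2 _
    have e7 : ∫ ω, (-2) * (q ω * s ω) ∂μ = (-2) * ∫ ω, q ω * s ω ∂μ :=
      integral_const_mul (-2) _
    have e8 : ∫ ω, (-2) * (a ω * s ω) ∂μ = (-2) * ∫ ω, a ω * s ω ∂μ :=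
      integral_const_mul (-2) _
    rw [hrw, e0, e1, e2, e3, e4, e5, e6, e7, e8, hEqa, hEqs, hcov] at hsq_eq
    have h4ε : (0 : ℝ) < 4 * ε := by positivity
    rw [eq_div_iff h4ε.ne']
    linear_combination -hsq_eq
  refine ⟨hEu, hEu2, hkey, fun hsmall => ?_⟩
  set V := (∫ ω, (a ω) ^ 2 ∂μ - (lam - ε) ^ 2) + (∫ ω, (s ω) ^ 2 ∂μ - (lam + ε) ^ 2) with hV
  have hVA : ε * (4 * A) ≤ V := (le_div_iff₀ (by positivity)).mp hsmall
  rw [hkey, div_le_div_iff₀ (by positivity) (by positivity)]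
  nlinarith [hEu2, sq_nonneg ε]
end

section
/- Consider two coupled discrete-time processes: an imbalance process $z(k+1) = z(k) + a_1(k) - a_2(k)$ on $\mathbb{Z}$, and a queue $q(k+1) = \max\{0, q(k) + a^\dagger(k) - s^\dagger(k)\}$ on $\mathbb{Z}_+$. Suppose $q(0) = |z(0)|$ and at every step $k$: if $z(k) \ge 0$ then $s^\dagger(k) \ge a_2(k)$ and $a^\dagger(k) \le a_1(k)$; if $z(k) < 0$ then $s^\dagger(k) \ge a_1(k)$ and $a^\dagger(k) \le a_2(k)$. Then $q(k) \le |z(k)|$ for all $k \ge 0$. -/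
/-- Pathwise coupling: the single-server queue is dominated by the absolute
imbalance of the two-sided queue. -/
theorem queue_dominated_by_imbalance
    (a₁ a₂ ad sd : ℕ → ℝ) (z q : ℕ → ℝ)
    (ha₁ : ∀ k, 0 ≤ a₁ k) (ha₂ : ∀ k, 0 ≤ a₂ k)
    (had : ∀ k, 0 ≤ ad k) (hsd : ∀ k, 0 ≤ sd k)
    (hz : ∀ k, z (k + 1) = z k + a₁ k - a₂ k)
    (hq : ∀ k, q (k + 1) = max 0 (q k + ad k - sd k))
    (h0 : q 0 = |z 0|)
    (hpos : ∀ k, 0 ≤ z k → a₂ k ≤ sd k ∧ ad k ≤ a₁ k)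
    (hneg : ∀ k, z k < 0 → a₁ k ≤ sd k ∧ ad k ≤ a₂ k) :
    ∀ k, q k ≤ |z k| := by
  intro k
  induction k with
  | zero => exact le_of_eq h0
  | succ k ih =>
    rw [hq k, hz k]
    apply max_le (abs_nonneg _)
    rcases le_or_gt 0 (z k) with h | h
    · obtain ⟨h1, h2⟩ := hpos k h
      calc q k + ad k - sd k ≤ |z k| + a₁ k - a₂ k := by linarith
        _ = z k + a₁ k - a₂ k := by rw [abs_of_nonneg h]
        _ ≤ |z k + a₁ k - a₂ k| := le_abs_self _
    · obtain ⟨h1, h2⟩ := hneg k h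
      calc q k + ad k - sd k ≤ |z k| + a₂ k - a₁ k := by linarith
        _ = -(z k + a₁ k - a₂ k) := by rw [abs_of_neg h]; ring
        _ ≤ |z k + a₁ k - a₂ k| := neg_le_abs _
end
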